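/- If k is a Hilbertian field and f ∈ k[x] is a polynomial whose evaluation map f_k : k → k is not surjective, then k \ f_k(k) is infinite. -/

import Mathlib

open Polynomial

/-- A field `k` is *Hilbertian* if for every polynomial `p(t,x) ∈ k[t][x]` which is
irreducible and separable as a polynomial in `x` over the rational function field `k(t)`,
there are infinitely many `t₀ ∈ k` such that the specialized polynomial `p(t₀, x)`
is irreducible in `k[x]`. -/
def IsHilbertianField (k : Type*) [Field k] : Prop :=
  ∀ p : Polynomial (Polynomial k),
    Irreducible (p.map (algebraMap (Polynomial k) (RatFunc k))) →
    (p.map (algebraMap (Polynomial k) (RatFunc k))).Separable →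
    {t₀ : k | Irreducible (p.map (Polynomial.evalRingHom t₀))}.Infinite

namespace HilbertianAux

variable {k : Type*} [Field k]

/-- The variable-swapping ring homomorphism on `k[t][x]`; it is an involution. -/
noncomputable def swap (k : Type*) [Field k] :
    Polynomial (Polynomial k) →+* Polynomial (Polynomial k) :=
  eval₂RingHom
    (eval₂RingHom ((C : Polynomial k →+* Polynomial (Polynomial k)).comp (C : k →+* Polynomial k))
      (X : Polynomial (Polynomial k))) (C X)

@[simp] lemma swap_CC (a : k) : swap k (C (C a)) = C (C a) := by
  simp [swap]

@[simp] lemma swap_CX : swap k (C X) = X := by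
  simp [swap]

@[simp] lemma swap_X : swap k X = C X := by
  simp [swap]

lemma swap_comp_swap : (swap k).comp (swap k) = RingHom.id _ := by
  apply ringHom_ext'
  · apply ringHom_ext'
    · ext a
      simp
    · simp
  · simp

lemma swap_swap (p : Polynomial (Polynomial k)) : swap k (swap k p) = p :=
  congr($(swap_comp_swap (k := k)) p)

/-- The variable swap as a ring equivalence. -/
noncomputable def swapEquiv (k : Type*) [Field k] :
    Polynomial (Polynomial k) ≃+* Polynomial (Polynomial k) :=
  RingEquiv.ofRingHom (swap k) (swap k) swap_comp_swap swap_comp_swap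

lemma swapEquiv_apply (p : Polynomial (Polynomial k)) : swapEquiv k p = swap k p := rfl

lemma swap_map_C (f : Polynomial k) : swap k (f.map C) = C f := by
  have h : (swap k).comp (mapRingHom (C : k →+* Polynomial k)) =
      (C : Polynomial k →+* Polynomial (Polynomial k)) := by
    apply ringHom_ext'
    · ext a
      simp
    · simp
  exact congr($h f)

/-- An irreducible polynomial of degree at least 2 over a field has no root. -/
lemma no_root_of_irreducible {q : Polynomial k} (hq : Irreducible q)
    (hd : 2 ≤ q.natDegree) (a : k) : q.eval a ≠ 0 := by
  intro h0
  obtain ⟨r, hr⟩ := dvd_iff_isRoot.mpr h0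
  rcases hq.isUnit_or_isUnit hr with hu | hu
  · exact not_isUnit_X_sub_C a hu
  · have hrne : r ≠ 0 := hu.ne_zero
    have h1 : q.natDegree = 1 + r.natDegree := by
      rw [hr, natDegree_mul (X_sub_C_ne_zero a) hrne, natDegree_X_sub_C]
    rw [natDegree_eq_zero_of_isUnit hu] at h1
    omega

/-- A Hilbertian field is infinite. -/
lemma infinite_of_hilbertian (hk : IsHilbertianField k) : Infinite k := by
  have h := hk X (by rw [Polynomial.map_X]; exact irreducible_X)
    (by rw [Polynomial.map_X]; exact separable_X)
  exact Set.infinite_univ_iff.mp (h.mono (Set.subset_univ _))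

/-- The complement of the range of a non-surjective ring endomorphism of an infinite field
is infinite. -/
lemma compl_range_infinite [Infinite k] (φ : k →+* k) (hφ : ¬ Function.Surjective φ) :
    (Set.range φ)ᶜ.Infinite := by
  have ha' : ∃ a, a ∉ Set.range φ := by
    by_contra hc
    push_neg at hc
    exact hφ fun t => hc t
  obtain ⟨a, ha⟩ := ha'
  by_cases hfin : (Set.range φ).Finite
  · exact hfin.infinite_compl
  · have hinf : (Set.range φ).Infinite := hfin
    have hsub : (fun y => a + y) '' Set.range φ ⊆ (Set.range φ)ᶜ := by
      rintro _ ⟨_, ⟨x, rfl⟩, rfl⟩ ⟨u, hu⟩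
      exact ha ⟨u - x, by rw [map_sub, hu]; ring⟩
    exact ((hinf.image (add_right_injective a).injOn)).mono hsub

/-- Key separable case: if `f` has degree at least `2` and nonzero derivative, then over a
Hilbertian field the complement of the range of its evaluation map is infinite. -/
lemma compl_infinite_of_sep (hk : IsHilbertianField k) (f : Polynomial k)
    (hd : 2 ≤ f.natDegree) (hder : derivative f ≠ 0) :
    (Set.range fun a : k => f.eval a)ᶜ.Infinite := by
  letI := Classical.decEq k
  set p : Polynomial (Polynomial k) := f.map C - C X with hp
  have hswap : swap k p = C f - X := by
    rw [hp, map_sub, swap_map_C, swap_CX]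
  have h1 : Irreducible (C f - X : Polynomial (Polynomial k)) := by
    have hassoc : Associated (X - C f : Polynomial (Polynomial k)) (C f - X) :=
      ⟨-1, by rw [Units.val_neg, Units.val_one, mul_neg_one, neg_sub]⟩
    exact hassoc.irreducible (irreducible_X_sub_C f)
  have hpirr : Irreducible p := by
    have := (MulEquiv.irreducible_iff (swapEquiv k) (x := p)).mp
      (by rw [swapEquiv_apply, hswap]; exact h1)
    exact this
  have hfne : f.coeff f.natDegree ≠ 0 := by
    have : f ≠ 0 := fun h0 => by simp [h0] at hd
    exact mt leadingCoeff_eq_zero.mp this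
  have hcoeff : p.coeff f.natDegree = C (f.coeff f.natDegree) := by
    rw [hp, coeff_sub, coeff_map, coeff_C, if_neg (by omega)]
    ring
  have hprim : p.IsPrimitive := by
    intro r hr
    have h2 : r ∣ p.coeff f.natDegree := (C_dvd_iff_dvd_coeff r p).1 hr _
    rw [hcoeff] at h2
    exact isUnit_of_dvd_unit h2 (isUnit_C.mpr hfne.isUnit)
  have hmap : Irreducible (p.map (algebraMap (Polynomial k) (RatFunc k))) :=
    (hprim.irreducible_iff_irreducible_map_fraction_map).mp hpirr
  have hsep : (p.map (algebraMap (Polynomial k) (RatFunc k))).Separable := by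
    rw [separable_iff_derivative_ne_zero hmap]
    have hform : p.map (algebraMap (Polynomial k) (RatFunc k)) =
        f.map ((algebraMap (Polynomial k) (RatFunc k)).comp C)
          - C (algebraMap (Polynomial k) (RatFunc k) X) := by
      rw [hp, Polynomial.map_sub, map_map, map_C]
    rw [hform, derivative_sub, derivative_C, sub_zero, derivative_map]
    intro h0
    exact hder ((Polynomial.map_eq_zero_iff
      (((algebraMap (Polynomial k) (RatFunc k)).comp C).injective)).mp h0)
  have hS := hk p hmap hsep
  refine hS.mono ?_
  intro t₀ ht₀
  have hform : p.map (evalRingHom t₀) = f - C t₀ := by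
    have hid : (evalRingHom t₀).comp (C : k →+* Polynomial k) = RingHom.id k :=
      RingHom.ext fun a => by simp
    rw [hp, Polynomial.map_sub, map_map, hid, Polynomial.map_id, map_C]
    simp
  rw [Set.mem_setOf_eq, hform] at ht₀
  rintro ⟨a, ha⟩
  have hdeg : 2 ≤ (f - C t₀).natDegree := by rwa [natDegree_sub_C]
  exact no_root_of_irreducible ht₀ hdeg a (by simp [ha])

/-- Decompose a polynomial as `g(x^q)` where `g` has nonzero derivative or is constant,
together with the `q`-power ring endomorphism. -/
lemma decomp (f : Polynomial k) :
    ∃ (q : ℕ) (φ : k →+* k) (g : Polynomial k),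
      q ≠ 0 ∧ (∀ a, φ a = a ^ q) ∧ f = expand k q g ∧
        (derivative g ≠ 0 ∨ g.natDegree = 0) := by
  generalize hn : f.natDegree = n
  induction n using Nat.strong_induction_on generalizing f with
  | _ n ih =>
    by_cases h0 : derivative f ≠ 0 ∨ f.natDegree = 0
    · exact ⟨1, RingHom.id k, f, one_ne_zero, fun a => (pow_one a).symm,
        (expand_one f).symm, h0⟩
    · push_neg at h0
      obtain ⟨hder, hdeg⟩ := h0
      haveI : CharP k (ringChar k) := ringChar.charP k
      rcases CharP.char_is_prime_or_zero k (ringChar k) with hp | hzero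
      · set pp := ringChar k with hpp
        have hf : f = expand k pp (contract pp f) := (expand_contract pp hder hp.ne_zero).symm
        have hnd : f.natDegree = (contract pp f).natDegree * pp := by
          conv_lhs => rw [hf]
          exact natDegree_expand pp (contract pp f)
        have hlt : (contract pp f).natDegree < n := by
          have h2 : 2 ≤ pp := hp.two_le
          rw [← hn] at *
          nlinarith [hnd, Nat.pos_of_ne_zero hdeg]
        obtain ⟨q, φ, g, hq0, hφ, hg, hor⟩ := ih _ hlt _ rfl
        haveI : ExpChar k pp := ExpChar.prime hp
        refine ⟨pp * q, φ.comp (frobenius k pp), g,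
          mul_ne_zero hp.ne_zero hq0, ?_, ?_, hor⟩
        · intro a
          simp [frobenius_def, hφ, pow_mul]
        · rw [hf, hg, expand_expand]
      · haveI : CharP k 0 := by rwa [hzero] at ‹CharP k (ringChar k)›
        haveI : CharZero k := CharP.charP_to_charZero k
        exact absurd (natDegree_eq_zero_of_derivative_eq_zero hder) hdeg

end HilbertianAux

open HilbertianAux in
/-- If `k` is a Hilbertian field and `f ∈ k[x]` has non-surjective evaluation map
`k → k`, then the complement of the image is infinite. -/
theorem hilbertian_nonsurjective_polynomial_misses_infinitely_many
    (k : Type*) [Field k] (hk : IsHilbertianField k)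
    (f : Polynomial k) (h : ¬ Function.Surjective fun a : k => f.eval a) :
    (Set.range fun a : k => f.eval a)ᶜ.Infinite := by
  haveI : Infinite k := infinite_of_hilbertian hk
  obtain ⟨q, φ, g, hq0, hφ, hfe, hor⟩ := decomp f
  have heval : ∀ a : k, f.eval a = g.eval (φ a) := fun a => by
    rw [hfe, expand_eval, hφ]
  rcases lt_or_ge g.natDegree 2 with hd | hd
  · interval_cases hdeg : g.natDegree
    · -- constant case
      have hsub : (Set.range fun a : k => f.eval a) ⊆ {g.coeff 0} := by
        rintro _ ⟨a, rfl⟩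
        simp only [heval a, Set.mem_singleton_iff]
        conv_lhs => rw [eq_C_of_natDegree_eq_zero hdeg]
        simp
      exact ((Set.finite_singleton _).infinite_compl).mono
        (Set.compl_subset_compl.mpr hsub)
    · -- affine case
      set c1 := g.coeff 1 with hc1def
      set c0 := g.coeff 0 with hc0def
      have hgne : g ≠ 0 := fun h0 => by simp [h0] at hdeg
      have hc1 : c1 ≠ 0 := by
        have : g.leadingCoeff ≠ 0 := leadingCoeff_ne_zero.mpr hgne
        rwa [leadingCoeff, hdeg] at this
      have hg : ∀ y : k, g.eval y = c1 * y + c0 := fun y => by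
        conv_lhs => rw [eq_X_add_C_of_natDegree_le_one (le_of_eq hdeg)]
        simp [hc1def, hc0def]
      have hφns : ¬ Function.Surjective φ := by
        intro hs
        apply h
        intro t
        obtain ⟨a, ha⟩ := hs ((t - c0) / c1)
        refine ⟨a, ?_⟩
        show eval a f = t
        rw [heval, ha, hg]
        field_simp
        ring
      have hC := compl_range_infinite φ hφns
      have himg : (fun y => c1 * y + c0) '' (Set.range φ)ᶜ ⊆
          (Set.range fun a : k => f.eval a)ᶜ := by
        rintro _ ⟨y, hy, rfl⟩ ⟨a, ha⟩
        apply hy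
        have ha' : eval a f = c1 * y + c0 := ha
        have h2 : c1 * φ a + c0 = c1 * y + c0 := by
          rw [← hg (φ a), ← heval a, ha']
        exact ⟨a, mul_left_cancel₀ hc1 (add_right_cancel h2)⟩
      have hinj : Set.InjOn (fun y => c1 * y + c0) (Set.range φ)ᶜ := by
        intro y _ z _ hyz
        simp only at hyz
        exact mul_left_cancel₀ hc1 (add_right_cancel hyz)
      exact (hC.image hinj).mono himg
  · -- degree ≥ 2: separable case applies to g
    have hder : derivative g ≠ 0 := hor.resolve_right (by omega)
    have hA := compl_infinite_of_sep hk g hd hder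
    refine hA.mono (Set.compl_subset_compl.mpr ?_)
    rintro _ ⟨a, rfl⟩
    exact ⟨φ a, (heval a).symm⟩
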